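/- A Z^n-graded module M over S = k[x_1,...,x_n] that is squarefree is generated as an S-module by its squarefree-degree components ⋃_{F ⊆ [n]} M_F; in particular, every squarefree module is finitely generated. -/
import Mathlib


open MvPolynomial

/-- The monomial `x^b` in `S = k[x_1, …, x_n]` for an exponent vector `b ∈ ℕⁿ`. -/
noncomputable def monomialOf (k : Type*) [Field k] {n : ℕ} (b : Fin n → ℕ) :
    MvPolynomial (Fin n) k :=
  monomial (Finsupp.equivFunOnFinite.symm b) 1

/-- `supp₊(a) = {i : a_i > 0}` for `a ∈ ℤⁿ`. -/
def posSupp {n : ℕ} (a : Fin n → ℤ) : Set (Fin n) := {i | 0 < a i}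

/-- A `ℤⁿ`-grading (by `k`-subspaces, compatible with multiplication by monomials)
on a module `M` over `S = k[x_1, …, x_n]`. -/
structure ZnGrading (k : Type*) [Field k] (n : ℕ) (M : Type*) [AddCommGroup M]
    [Module (MvPolynomial (Fin n) k) M] [Module k M]
    [IsScalarTower k (MvPolynomial (Fin n) k) M] where
  /-- the degree-`a` component `M_a` -/
  deg : (Fin n → ℤ) → Submodule k M
  /-- `M = ⊕_a M_a` -/
  internal : DirectSum.IsInternal deg
  /-- `x^b · M_a ⊆ M_{a+b}` -/
  smul_mem : ∀ (a : Fin n → ℤ) (b : Fin n → ℕ), ∀ m ∈ deg a,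
    (monomialOf k b) • m ∈ deg (a + fun i => (b i : ℤ))

/-- A `ℤⁿ`-graded `S`-module is *squarefree* if it is `ℕⁿ`-graded with
finite-dimensional components, and multiplication `x^b : M_a → M_{a+b}` is bijective
whenever `supp₊(a+b) = supp₊(a)`. -/
def ZnGrading.IsSquarefree {k : Type*} [Field k] {n : ℕ} {M : Type*}
    [AddCommGroup M] [Module (MvPolynomial (Fin n) k) M] [Module k M]
    [IsScalarTower k (MvPolynomial (Fin n) k) M] (G : ZnGrading k n M) : Prop :=
  (∀ a : Fin n → ℤ, (∃ i, a i < 0) → G.deg a = ⊥) ∧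
  (∀ a : Fin n → ℤ, FiniteDimensional k (G.deg a)) ∧
  (∀ a b : Fin n → ℕ,
    posSupp (fun i => ((a i : ℤ) + (b i : ℤ))) = posSupp (fun i => (a i : ℤ)) →
    Set.BijOn (fun m => (monomialOf k b) • m)
      ((G.deg fun i => (a i : ℤ)) : Set M)
      ((G.deg fun i => (a i : ℤ) + (b i : ℤ)) : Set M))

/-- a squarefree `ℤⁿ`-graded module over `S = k[x_1, …, x_n]` is
generated as an `S`-module by its squarefree-degree components `⋃_{F ⊆ [n]} M_F`;
in particular every squarefree module is finitely generated. -/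
theorem squarefree_generated_by_squarefree_degrees
    {k : Type*} [Field k] {n : ℕ} {M : Type*} [AddCommGroup M]
    [Module (MvPolynomial (Fin n) k) M] [Module k M]
    [IsScalarTower k (MvPolynomial (Fin n) k) M]
    (G : ZnGrading k n M) (hsq : G.IsSquarefree) :
    Submodule.span (MvPolynomial (Fin n) k)
        (⋃ F : Finset (Fin n),
          (G.deg (fun i => if i ∈ F then (1 : ℤ) else 0) : Set M)) = ⊤ ∧
      Module.Finite (MvPolynomial (Fin n) k) M := by
  obtain ⟨hneg, hfin, hbij⟩ := hsq
  set T : Set M := (⋃ F : Finset (Fin n),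
      (G.deg (fun i => if i ∈ F then (1 : ℤ) else 0) : Set M)) with hT
  have key : ∀ a : Fin n → ℤ, (G.deg a : Set M) ⊆
      (Submodule.span (MvPolynomial (Fin n) k) T : Set M) := by
    intro a
    by_cases hpos : ∀ i, 0 ≤ a i
    · set F : Finset (Fin n) := Finset.univ.filter (fun i => 0 < a i) with hF
      set a0 : Fin n → ℕ := fun i => if i ∈ F then 1 else 0 with ha0
      set b : Fin n → ℕ := fun i => (a i).toNat - a0 i with hb
      have hab : ∀ i, (a0 i : ℤ) + b i = a i := by
        intro i
        have := hpos i
        by_cases h : 0 < a i <;> simp [ha0, hb, hF, h] <;> omega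
      have hsupp : posSupp (fun i => ((a0 i : ℤ) + b i)) = posSupp (fun i => (a0 i : ℤ)) := by
        ext i
        have := hpos i
        by_cases h : 0 < a i <;> simp [posSupp, ha0, hb, hF, h] <;> omega
      have hB := hbij a0 b hsupp
      intro m hm
      have hfun : (fun i => (a0 i : ℤ) + (b i : ℤ)) = a := funext hab
      have hm' : m ∈ ((G.deg fun i => (a0 i : ℤ) + (b i : ℤ)) : Set M) := by
        rw [hfun]; exact hm
      obtain ⟨m0, hm0, hm0eq⟩ := hB.surjOn hm'
      have hcongr : (fun i => (a0 i : ℤ)) = fun i => if i ∈ F then (1 : ℤ) else 0 := by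
        funext i; by_cases h : i ∈ F <;> simp [ha0, h]
      have hm0T : m0 ∈ T := by
        rw [hT]
        exact Set.mem_iUnion.mpr ⟨F, by rw [← hcongr]; exact hm0⟩
      rw [← hm0eq]
      exact Submodule.smul_mem _ _ (Submodule.subset_span hm0T)
    · push_neg at hpos
      obtain ⟨i, hi⟩ := hpos
      rw [hneg a ⟨i, by omega⟩]
      simp
  have htop : Submodule.span (MvPolynomial (Fin n) k) T = ⊤ := by
    rw [Submodule.eq_top_iff']
    intro m
    have hm : m ∈ ⨆ a, G.deg a := by
      rw [G.internal.submodule_iSup_eq_top]; trivial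
    have hle : (⨆ a, G.deg a) ≤
        (Submodule.span (MvPolynomial (Fin n) k) T).restrictScalars k :=
      iSup_le fun a => key a
    exact hle hm
  refine ⟨htop, ?_⟩
  have hfg : ∀ F : Finset (Fin n),
      (G.deg (fun i => if i ∈ F then (1 : ℤ) else 0)).FG := by
    intro F
    have := hfin (fun i => if i ∈ F then (1 : ℤ) else 0)
    exact Module.Finite.iff_fg.mp this
  choose s hs using fun F => (Submodule.fg_def.mp (hfg F))
  have hsspan : ∀ F, Submodule.span k (s F) = G.deg (fun i => if i ∈ F then (1 : ℤ) else 0) :=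
    fun F => (hs F).2
  have hfinU : (⋃ F : Finset (Fin n), s F).Finite :=
    Set.finite_iUnion fun F => (hs F).1
  refine ⟨⟨hfinU.toFinset, ?_⟩⟩
  rw [eq_top_iff, ← htop]
  apply Submodule.span_le.mpr
  intro x hx
  obtain ⟨F, hF⟩ := Set.mem_iUnion.mp hx
  have : x ∈ Submodule.span k (s F) := by rw [hsspan F]; exact hF
  have hsub : Submodule.span k (s F) ≤
      (Submodule.span (MvPolynomial (Fin n) k) (hfinU.toFinset : Set M)).restrictScalars k := by
    apply Submodule.span_le.mpr
    intro y hy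
    apply Submodule.subset_span
    simp only [Set.Finite.coe_toFinset]
    exact Set.mem_iUnion.mpr ⟨F, hy⟩
  exact hsub this
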